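/- Let n ≥ 0 and a_1,…,a_n ∈ Σ, let X = (S, μ : L → Σ, T) be a weak higher dimensional transition system, and let f_0 : {0,1}^n → S and f̃ : {(a_1,1),…,(a_n,n)} → L be set maps with μ(f̃(a_i,i)) = a_i for all i. Then the following are equivalent: (1) the pair (f_0, f̃) is a morphism of weak higher dimensional transition systems from C_n[a_1,…,a_n] to X, i.e. it takes every transition of C_n[a_1,…,a_n] to a transition of X; (2) for every transition ((ε_1,…,ε_n),(a_{i_1},i_1),…,(a_{i_r},i_r),(ε'_1,…,ε'_n)) of C_n[a_1,…,a_n] with (ε_1,…,ε_n) = 0_n or (ε'_1,…,ε'_n) = 1_n, the tuple (f_0(ε_1,…,ε_n), f̃(a_{i_1},i_1),…, f̃(a_{i_r},i_r), f_0(ε'_1,…,ε'_n)) is a transition of X. -/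

import Mathlib

variable {S L Λ : Type*}

/-- The Multiset axiom: the set of transitions is closed under permutations of
the list of actions. -/
def MultisetAxiom (T : S → List L → S → Prop) : Prop :=
  ∀ (α β : S) (l l' : List L), l.Perm l' → T α l β → T α l' β

/-- The Coherence axiom. -/
def CoherenceAxiom (T : S → List L → S → Prop) : Prop :=
  ∀ (α β ν₁ ν₂ : S) (l₁ l₂ l₃ : List L), l₁ ≠ [] → l₂ ≠ [] → l₃ ≠ [] →
    T α (l₁ ++ l₂ ++ l₃) β → T α l₁ ν₁ → T ν₁ (l₂ ++ l₃) β →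
    T α (l₁ ++ l₂) ν₂ → T ν₂ l₃ β → T ν₁ l₂ ν₂

/-- The first Cattani-Sassone axiom. -/
def CSA1 (μ : L → Λ) (T : S → List L → S → Prop) : Prop :=
  ∀ (α β : S) (u u' : L), T α [u] β → T α [u'] β → μ u = μ u' → u = u'

/-- The second Cattani-Sassone axiom. -/
def CSA2 (T : S → List L → S → Prop) : Prop :=
  ∀ (α β : S) (l₁ l₂ : List L), l₁ ≠ [] → l₂ ≠ [] → T α (l₁ ++ l₂) β →
    (∃! ν₁, T α l₁ ν₁ ∧ T ν₁ l₂ β) ∧ (∃! ν₂, T α l₂ ν₂ ∧ T ν₂ l₁ β)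

/-- The third Cattani-Sassone axiom. -/
def CSA3 (T : S → List L → S → Prop) : Prop :=
  ∀ (α β ν₁ ν₂ ν₁' ν₂' : S) (l₁ l₂ l₃ : List L), l₁ ≠ [] → l₂ ≠ [] → l₃ ≠ [] →
    T α (l₁ ++ l₂ ++ l₃) β → T α l₁ ν₁ → T ν₁ (l₂ ++ l₃) β →
    T ν₁ l₂ ν₂ → T ν₂ l₃ β → T α (l₁ ++ l₂) ν₂' → T ν₂' l₃ β →
    T α l₁ ν₁' → T ν₁' l₂ ν₂' → ν₁ = ν₁' ∧ ν₂ = ν₂'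

/-- The set of transitions of the cube `C_n[a_1,…,a_n]`: the states are the
elements of `{0,1}^n`, the actions are the indices `i ∈ {1,…,n}` (the action
`i` standing for the pair `(a_i, i)`, labelled by `a_i`). -/
@[reducible] def CubeT (n : ℕ) (ε : Fin n → Bool) (l : List (Fin n)) (ε' : Fin n → Bool) :
    Prop :=
  l ≠ [] ∧ l.Nodup ∧ (∀ i, ε i ≤ ε' i) ∧ ∀ i : Fin n, ε i ≠ ε' i ↔ i ∈ l

/-- A pair of set maps `(f₀, f̃)` from the cube `C_n[a_1,…,a_n]` to a weak
higher dimensional transition system `X = (S, μ : L → Σ, T)`, compatible with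
the labelling, induces a morphism of weak higher dimensional transition systems
(i.e. takes every transition of the cube to a transition of `X`) if and only if
it takes every transition of the cube starting at `0_n` or ending at `1_n` to a
transition of `X`. -/
theorem cube_morphism_iff_boundary {Λ S L : Type*} (n : ℕ) (a : Fin n → Λ)
    (μ : L → Λ) (T : S → List L → S → Prop)
    (hne : ∀ α l β, T α l β → l ≠ [])
    (hmul : MultisetAxiom T) (hcoh : CoherenceAxiom T)
    (f0 : (Fin n → Bool) → S) (fa : Fin n → L) (hlabel : ∀ i, μ (fa i) = a i) :
    (∀ (ε : Fin n → Bool) (l : List (Fin n)) (ε' : Fin n → Bool),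
        CubeT n ε l ε' → T (f0 ε) (l.map fa) (f0 ε')) ↔
    (∀ (ε : Fin n → Bool) (l : List (Fin n)) (ε' : Fin n → Bool),
        CubeT n ε l ε' → ((ε = fun _ => false) ∨ (ε' = fun _ => true)) →
        T (f0 ε) (l.map fa) (f0 ε')) := by
  constructor
  · intro h ε l ε' hc _
    exact h ε l ε' hc
  · intro h ε l ε' hc
    by_cases h0 : ε = fun _ => false
    · exact h ε l ε' hc (Or.inl h0)
    by_cases h1 : ε' = fun _ => true
    · exact h ε l ε' hc (Or.inr h1)
    obtain ⟨hlne, hnd, hle, hmem⟩ := hc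
    have hle' : ∀ i, ε i = true → ε' i = true := by
      intro i hi
      have := hle i
      rw [hi] at this
      exact le_antisymm (Bool.le_true _) this
    set l₁ := (List.finRange n).filter (fun i => ε i) with hl₁
    set l₃ := (List.finRange n).filter (fun i => !ε' i) with hl₃
    have m1 : ∀ i, i ∈ l₁ ↔ ε i = true := by
      intro i; rw [hl₁, List.mem_filter]; simp
    have m3 : ∀ i, i ∈ l₃ ↔ ε' i = false := by
      intro i; rw [hl₃, List.mem_filter]; simp
    have ml : ∀ i ∈ l, ε i = false ∧ ε' i = true := by
      intro i hi
      have h2 := (hmem i).2 hi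
      cases hε : ε i with
      | true => exact absurd (hε.trans (hle' i hε).symm) h2
      | false =>
        refine ⟨rfl, ?_⟩
        cases hε' : ε' i with
        | true => rfl
        | false => exact absurd (hε.trans hε'.symm) h2
    have hne1 : l₁ ≠ [] := by
      have : ∃ i, ε i = true := by
        by_contra hc
        push_neg at hc
        exact h0 (funext fun i => by
          have := hc i; revert this; cases ε i <;> simp)
      obtain ⟨i, hi⟩ := this
      intro he
      have := (m1 i).2 hi
      rw [he] at this
      exact absurd this List.not_mem_nil
    have hne3 : l₃ ≠ [] := by
      have : ∃ i, ε' i = false := by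
        by_contra hc
        push_neg at hc
        exact h1 (funext fun i => by
          have := hc i; revert this; cases ε' i <;> simp)
      obtain ⟨i, hi⟩ := this
      intro he
      have := (m3 i).2 hi
      rw [he] at this
      exact absurd this List.not_mem_nil
    have nd1 : l₁.Nodup := List.Nodup.filter _ (List.nodup_finRange n)
    have nd3 : l₃.Nodup := List.Nodup.filter _ (List.nodup_finRange n)
    have d1l : l₁.Disjoint l := by
      intro i hi hi'
      have ha := (m1 i).1 hi
      have hb := (ml i hi').1
      rw [ha] at hb; exact Bool.noConfusion hb
    have dl3 : l.Disjoint l₃ := by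
      intro i hi hi'
      have ha := (m3 i).1 hi'
      have hb := (ml i hi).2
      rw [ha] at hb; exact Bool.noConfusion hb
    have d13 : l₁.Disjoint l₃ := by
      intro i hi hi'
      have ha := (m1 i).1 hi
      have hb := (m3 i).1 hi'
      have hc := hle' i ha
      rw [hb] at hc; exact Bool.noConfusion hc
    -- the five boundary cube transitions
    have c1 : CubeT n (fun _ => false) l₁ ε := by
      refine ⟨hne1, nd1, fun i => Bool.false_le _, fun i => ?_⟩
      rw [m1]
      show false ≠ ε i ↔ _
      cases hε : ε i <;> simp
    have c2 : CubeT n ε (l ++ l₃) (fun _ => true) := by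
      refine ⟨by simp [hlne], List.Nodup.append hnd nd3 dl3, fun i => Bool.le_true _,
        fun i => ?_⟩
      rw [List.mem_append, m3]
      show ε i ≠ true ↔ _
      constructor
      · intro hne'
        have hεi : ε i = false := by revert hne'; cases ε i <;> simp
        cases hε' : ε' i with
        | true => exact Or.inl ((hmem i).1 (by rw [hεi, hε']; exact Bool.false_ne_true))
        | false => exact Or.inr rfl
      · rintro (hi | hi)
        · rw [(ml i hi).1]; exact Bool.false_ne_true
        · intro hε
          have hx := hle' i hε
          rw [hi] at hx; exact Bool.noConfusion hx
    have c3 : CubeT n (fun _ => false) (l₁ ++ l) ε' := by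
      refine ⟨by simp [hne1], List.Nodup.append nd1 hnd d1l, fun i => Bool.false_le _,
        fun i => ?_⟩
      rw [List.mem_append, m1]
      show false ≠ ε' i ↔ _
      constructor
      · intro hne'
        have hε'i : ε' i = true := by revert hne'; cases ε' i <;> simp
        cases hε : ε i with
        | true => exact Or.inl rfl
        | false => exact Or.inr ((hmem i).1 (by rw [hε, hε'i]; exact Bool.false_ne_true))
      · rintro (hi | hi)
        · rw [hle' i hi]; exact Bool.false_ne_true
        · rw [(ml i hi).2]; exact Bool.false_ne_true
    have c4 : CubeT n ε' l₃ (fun _ => true) := by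
      refine ⟨hne3, nd3, fun i => Bool.le_true _, fun i => ?_⟩
      rw [m3]
      show ε' i ≠ true ↔ _
      cases hε' : ε' i <;> simp
    have c5 : CubeT n (fun _ => false) (l₁ ++ l ++ l₃) (fun _ => true) := by
      refine ⟨by simp [hlne], ?_, fun i => Bool.false_le _, fun i => ?_⟩
      · exact List.Nodup.append (List.Nodup.append nd1 hnd d1l) nd3
          (List.disjoint_append_left.2 ⟨d13, dl3⟩)
      · rw [List.mem_append, List.mem_append, m1, m3]
        show false ≠ true ↔ _
        constructor
        · intro _
          cases hε : ε i with
          | true => exact Or.inl (Or.inl rfl)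
          | false =>
            cases hε' : ε' i with
            | false => exact Or.inr rfl
            | true => exact Or.inl (Or.inr ((hmem i).1
                (by rw [hε, hε']; exact Bool.false_ne_true)))
        · intro _; exact Bool.false_ne_true
    -- transport to X and apply coherence
    have t1 := h _ _ _ c1 (Or.inl rfl)
    have t2 := h _ _ _ c2 (Or.inr rfl)
    have t3 := h _ _ _ c3 (Or.inl rfl)
    have t4 := h _ _ _ c4 (Or.inr rfl)
    have t5 := h _ _ _ c5 (Or.inl rfl)
    rw [List.map_append] at t2 t3
    rw [List.map_append, List.map_append] at t5
    exact hcoh (f0 (fun _ => false)) (f0 (fun _ => true)) (f0 ε) (f0 ε')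
      (l₁.map fa) (l.map fa) (l₃.map fa)
      (by simp [hne1]) (by simp [hlne]) (by simp [hne3]) t5 t1 t2 t3 t4
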